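/- Let s and t be rational numbers with s ≠ 0 and t² ≠ s. Then the Weierstrass curve F_s(t) satisfies c₄³/Δ = −2⁶·3³·(t² − s)/s. Consequently, for a fixed nonzero s, any two fibres F_s(t₁) and F_s(t₂) with t₁² ≠ t₂² (and t₁², t₂² ≠ s) have distinct j-invariants, so the family F_s is non-isotrivial. -/

import Mathlib

/-- The Weierstrass curve `F_s(t) : y² = x³ + 3t·x² + 3s·x + s·t`. -/
def Fcurve (s t : ℚ) : WeierstrassCurve ℚ :=
  { a₁ := 0, a₂ := 3 * t, a₃ := 0, a₄ := 3 * s, a₆ := s * t }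

lemma Fcurve_c₄ (s t : ℚ) : (Fcurve s t).c₄ = 144 * (t ^ 2 - s) := by
  simp only [Fcurve, WeierstrassCurve.c₄, WeierstrassCurve.b₂, WeierstrassCurve.b₄]
  ring

lemma Fcurve_Δ (s t : ℚ) : (Fcurve s t).Δ = -1728 * s * (t ^ 2 - s) ^ 2 := by
  simp only [Fcurve, WeierstrassCurve.Δ, WeierstrassCurve.b₂, WeierstrassCurve.b₄,
    WeierstrassCurve.b₆, WeierstrassCurve.b₈]
  ring

theorem Fcurve_j_invariant (s : ℚ) (hs : s ≠ 0) :
    (∀ t : ℚ, t ^ 2 ≠ s →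
      (Fcurve s t).c₄ ^ 3 / (Fcurve s t).Δ = -(2 ^ 6) * 3 ^ 3 * (t ^ 2 - s) / s) ∧
    (∀ t₁ t₂ : ℚ, t₁ ^ 2 ≠ s → t₂ ^ 2 ≠ s → t₁ ^ 2 ≠ t₂ ^ 2 →
      (Fcurve s t₁).c₄ ^ 3 / (Fcurve s t₁).Δ ≠ (Fcurve s t₂).c₄ ^ 3 / (Fcurve s t₂).Δ) := by
  have key : ∀ t : ℚ, t ^ 2 ≠ s →
      (Fcurve s t).c₄ ^ 3 / (Fcurve s t).Δ = -(2 ^ 6) * 3 ^ 3 * (t ^ 2 - s) / s := by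
    intro t ht
    have h : t ^ 2 - s ≠ 0 := sub_ne_zero.mpr ht
    rw [Fcurve_c₄, Fcurve_Δ]
    field_simp
    ring
  refine ⟨key, fun t₁ t₂ h₁ h₂ hne heq => ?_⟩
  rw [key t₁ h₁, key t₂ h₂] at heq
  apply hne
  field_simp at heq
  linarith
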